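/- Let f : ℝⁿ → ℝ and G : ℝⁿ → S^m be twice continuously differentiable. Suppose (x,Y,Λ) ∈ ℝⁿ × S^m × S^m is a KKT triple of (P2) such that Y ∈ Φ(Λ), i.e., ⟨W∘W, Λ⟩ > 0 for every nonzero W ∈ S^m with Y∘W = 0. Then (x,Λ) is a KKT pair of (P1) satisfying strict complementarity: rank G(x) + rank Λ = m. -/

import Mathlib

open Matrix

noncomputable section

def jmul {m : ℕ} (A B : Matrix (Fin m) (Fin m) ℝ) : Matrix (Fin m) (Fin m) ℝ :=
  (1 / 2 : ℝ) • (A * B + B * A)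

def minner {m : ℕ} (A B : Matrix (Fin m) (Fin m) ℝ) : ℝ :=
  (A * B).trace

def memPhi {m : ℕ} (Λ Y : Matrix (Fin m) (Fin m) ℝ) : Prop :=
  ∀ W : Matrix (Fin m) (Fin m) ℝ, W.IsSymm → W ≠ 0 → jmul Y W = 0 →
    0 < minner (jmul W W) Λ

def pderivG {n m : ℕ} (G : (Fin n → ℝ) → Matrix (Fin m) (Fin m) ℝ)
    (x : Fin n → ℝ) (k : Fin n) : Matrix (Fin m) (Fin m) ℝ :=
  Matrix.of fun i j => fderiv ℝ (fun y => G y i j) x (Pi.single k 1)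

def dirDerivG {n m : ℕ} (G : (Fin n → ℝ) → Matrix (Fin m) (Fin m) ℝ)
    (x v : Fin n → ℝ) : Matrix (Fin m) (Fin m) ℝ :=
  ∑ k, v k • pderivG G x k

def adjDG {n m : ℕ} (G : (Fin n → ℝ) → Matrix (Fin m) (Fin m) ℝ)
    (x : Fin n → ℝ) (W : Matrix (Fin m) (Fin m) ℝ) : Fin n → ℝ :=
  fun k => minner (pderivG G x k) W

def gradf {n : ℕ} (f : (Fin n → ℝ) → ℝ) (x : Fin n → ℝ) : Fin n → ℝ :=
  fun k => fderiv ℝ f x (Pi.single k 1)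

def KKT1 {n m : ℕ} (f : (Fin n → ℝ) → ℝ) (G : (Fin n → ℝ) → Matrix (Fin m) (Fin m) ℝ)
    (x : Fin n → ℝ) (Λ : Matrix (Fin m) (Fin m) ℝ) : Prop :=
  gradf f x = adjDG G x Λ ∧ Λ.PosSemidef ∧ (G x).PosSemidef ∧ jmul Λ (G x) = 0

def KKT2 {n m : ℕ} (f : (Fin n → ℝ) → ℝ) (G : (Fin n → ℝ) → Matrix (Fin m) (Fin m) ℝ)
    (x : Fin n → ℝ) (Y Λ : Matrix (Fin m) (Fin m) ℝ) : Prop :=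
  gradf f x = adjDG G x Λ ∧ jmul Λ Y = 0 ∧ G x = jmul Y Y

def hessQ {n m : ℕ} (f : (Fin n → ℝ) → ℝ) (G : (Fin n → ℝ) → Matrix (Fin m) (Fin m) ℝ)
    (Λ : Matrix (Fin m) (Fin m) ℝ) (x v : Fin n → ℝ) : ℝ :=
  iteratedFDeriv ℝ 2 (fun y => f y - minner (G y) Λ) x ![v, v]

def SOSCNLP {n m : ℕ} (f : (Fin n → ℝ) → ℝ) (G : (Fin n → ℝ) → Matrix (Fin m) (Fin m) ℝ)
    (x : Fin n → ℝ) (Y Λ : Matrix (Fin m) (Fin m) ℝ) : Prop :=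
  ∀ (v : Fin n → ℝ) (W : Matrix (Fin m) (Fin m) ℝ), W.IsSymm →
    ¬(v = 0 ∧ W = 0) → dirDerivG G x v = (2 : ℝ) • jmul Y W →
    0 < hessQ f G Λ x v + 2 * minner (jmul W W) Λ

def SONCNLP {n m : ℕ} (f : (Fin n → ℝ) → ℝ) (G : (Fin n → ℝ) → Matrix (Fin m) (Fin m) ℝ)
    (x : Fin n → ℝ) (Y Λ : Matrix (Fin m) (Fin m) ℝ) : Prop :=
  ∀ (v : Fin n → ℝ) (W : Matrix (Fin m) (Fin m) ℝ), W.IsSymm →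
    dirDerivG G x v = (2 : ℝ) • jmul Y W →
    0 ≤ hessQ f G Λ x v + 2 * minner (jmul W W) Λ

def LICQ {n m : ℕ} (G : (Fin n → ℝ) → Matrix (Fin m) (Fin m) ℝ)
    (x : Fin n → ℝ) (Y : Matrix (Fin m) (Fin m) ℝ) : Prop :=
  ∀ W : Matrix (Fin m) (Fin m) ℝ, W.IsSymm → jmul Y W = 0 → adjDG G x W = 0 → W = 0

def Nondeg {n m : ℕ} (G : (Fin n → ℝ) → Matrix (Fin m) (Fin m) ℝ)
    (x : Fin n → ℝ) : Prop :=
  ∀ W : Matrix (Fin m) (Fin m) ℝ, W.IsSymm → G x * W = 0 → adjDG G x W = 0 → W = 0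

def CritCone {n m : ℕ} (f : (Fin n → ℝ) → ℝ) (G : (Fin n → ℝ) → Matrix (Fin m) (Fin m) ℝ)
    (x : Fin n → ℝ) : Set (Fin n → ℝ) :=
  {d | (∀ u : Fin m → ℝ, G x *ᵥ u = 0 → 0 ≤ u ⬝ᵥ (dirDerivG G x d *ᵥ u)) ∧
    gradf f x ⬝ᵥ d = 0}

def IsMPInv {m : ℕ} (A P : Matrix (Fin m) (Fin m) ℝ) : Prop :=
  A * P * A = A ∧ P * A * P = P ∧ (A * P)ᵀ = A * P ∧ (P * A)ᵀ = P * A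

def Hmat {n m : ℕ} (G : (Fin n → ℝ) → Matrix (Fin m) (Fin m) ℝ)
    (x : Fin n → ℝ) (Λ P : Matrix (Fin m) (Fin m) ℝ) : Matrix (Fin n) (Fin n) ℝ :=
  Matrix.of fun i j => 2 * (pderivG G x i * P * pderivG G x j * Λ).trace


section helpers
variable {m : ℕ}

lemma myvecMulVec_transpose (a b : Fin m → ℝ) : (vecMulVec a b)ᵀ = vecMulVec b a := by
  ext i j; simp [vecMulVec_apply, mul_comm]

lemma mymul_vecMulVec (M : Matrix (Fin m) (Fin m) ℝ) (a b : Fin m → ℝ) :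
    M * vecMulVec a b = vecMulVec (M *ᵥ a) b := by
  ext i j
  simp [mul_apply, vecMulVec_apply, mulVec, dotProduct, Finset.sum_mul, mul_assoc]

lemma myvecMulVec_mul (a b : Fin m → ℝ) (M : Matrix (Fin m) (Fin m) ℝ) :
    vecMulVec a b * M = vecMulVec a (Mᵀ *ᵥ b) := by
  ext i j
  simp only [mul_apply, vecMulVec_apply, mulVec, dotProduct, transpose_apply, Finset.mul_sum]
  exact Finset.sum_congr rfl fun k _ => by ring

lemma myvecMulVec_mul_vecMulVec (a b c d : Fin m → ℝ) :
    vecMulVec a b * vecMulVec c d = (b ⬝ᵥ c) • vecMulVec a d := by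
  ext i j
  simp only [mul_apply, vecMulVec_apply, Matrix.smul_apply, dotProduct, smul_eq_mul, Finset.sum_mul]
  exact Finset.sum_congr rfl fun k _ => by ring

lemma mytrace_vecMulVec (a b : Fin m → ℝ) : (vecMulVec a b).trace = a ⬝ᵥ b := by
  simp [trace, diag, vecMulVec_apply, dotProduct]

lemma myvecMulVec_smul_left (c : ℝ) (a b : Fin m → ℝ) :
    vecMulVec (c • a) b = c • vecMulVec a b := by
  ext i j; simp [vecMulVec_apply, mul_assoc]

lemma myvecMulVec_smul_right (c : ℝ) (a b : Fin m → ℝ) :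
    vecMulVec a (c • b) = c • vecMulVec a b := by
  ext i j; simp [vecMulVec_apply]; ring

lemma myvecMulVec_mulVec (a b c : Fin m → ℝ) :
    vecMulVec a b *ᵥ c = (b ⬝ᵥ c) • a := by
  ext i
  simp only [mulVec, dotProduct, vecMulVec_apply, Pi.smul_apply, smul_eq_mul]
  rw [Finset.sum_mul]
  exact Finset.sum_congr rfl fun k _ => by ring

end helpers

section core
variable {m : ℕ} {Y Λ : Matrix (Fin m) (Fin m) ℝ}

lemma mydot_self_pos {v : Fin m → ℝ} (h : v ≠ 0) : 0 < v ⬝ᵥ v := by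
  rcases (Finset.sum_nonneg fun i _ => mul_self_nonneg (v i) : 0 ≤ v ⬝ᵥ v).lt_or_eq with h' | h'
  · exact h'
  · exact absurd (dotProduct_self_eq_zero.mp h'.symm) h

lemma eig_orth (hY : Y.IsSymm) {a c : Fin m → ℝ} {α β : ℝ} (hab : α ≠ β)
    (ha : Y *ᵥ a = α • a) (hc : Y *ᵥ c = β • c) : a ⬝ᵥ c = 0 := by
  have h1 : a ⬝ᵥ (Y *ᵥ c) = (Y *ᵥ a) ⬝ᵥ c := by
    rw [dotProduct_mulVec]
    congr 1
    nth_rewrite 1 [← hY.eq]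
    rw [vecMul_transpose]
  rw [ha, hc, dotProduct_smul, smul_dotProduct] at h1
  have h2 : (β - α) * (a ⬝ᵥ c) = 0 := by
    simp only [smul_eq_mul] at h1; ring_nf; linarith [h1]
  rcases mul_eq_zero.mp h2 with h | h
  · exact absurd (by linarith : α = β) hab
  · exact h

lemma jmul_eq_zero_iff (A B : Matrix (Fin m) (Fin m) ℝ) :
    jmul A B = 0 ↔ A * B + B * A = 0 := by
  constructor
  · intro h
    have h2 := congrArg (fun M => (2:ℝ) • M) h
    simpa [jmul, smul_smul] using h2
  · intro h; simp [jmul, h]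

lemma ker_pos (hY : Y.IsSymm) (hΛ : Λ.IsSymm) (hPhi : memPhi Λ Y) {w : Fin m → ℝ} (hw0 : w ≠ 0)
    (hw : Y *ᵥ w = 0) : 0 < w ⬝ᵥ (Λ *ᵥ w) := by
  set W := vecMulVec w w with hW
  have hWs : W.IsSymm := by rw [Matrix.IsSymm, hW, myvecMulVec_transpose]
  have hWY : jmul Y W = 0 := by
    rw [jmul_eq_zero_iff, hW, mymul_vecMulVec, myvecMulVec_mul, hY.eq, hw]
    ext i j; simp [vecMulVec_apply]
  have hWne : W ≠ 0 := by
    intro h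
    obtain ⟨i, hi⟩ := Function.ne_iff.mp hw0
    have hi' : w i ≠ 0 := by simpa using hi
    have hWii : W i i = 0 := by rw [h]; rfl
    rw [hW, vecMulVec_apply] at hWii
    exact hi' (by nlinarith)
  have hpos := hPhi W hWs hWne hWY
  have hWW : jmul W W = W * W := by rw [jmul]; module
  have hWsq : W * W = (w ⬝ᵥ w) • vecMulVec w w := by
    rw [hW, myvecMulVec_mul_vecMulVec]
  have hww : 0 < w ⬝ᵥ w := mydot_self_pos hw0
  rw [hWW, hWsq, minner, smul_mul_assoc, trace_smul, myvecMulVec_mul, mytrace_vecMulVec,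
    smul_eq_mul, hΛ.eq] at hpos
  nlinarith [hpos]

lemma key_eig (hY : Y.IsSymm) (hΛ : Λ.IsSymm) (hAC : Λ * Y + Y * Λ = 0)
    (hPhi : memPhi Λ Y) {u : Fin m → ℝ} {μ : ℝ} (hμ : μ ≠ 0) (hu : Y *ᵥ u = μ • u) :
    Λ *ᵥ u = 0 := by
  by_contra hv
  set v := Λ *ᵥ u with hvdef
  have hanti : ∀ w : Fin m → ℝ, ∀ ν : ℝ, Y *ᵥ w = ν • w → Y *ᵥ (Λ *ᵥ w) = (-ν) • (Λ *ᵥ w) := by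
    intro w ν hw
    have hYΛ : Y * Λ = -(Λ * Y) := eq_neg_of_add_eq_zero_right hAC
    rw [mulVec_mulVec, hYΛ, neg_mulVec, ← mulVec_mulVec, hw, mulVec_smul, neg_smul]
  have hYv : Y *ᵥ v = (-μ) • v := hanti u μ hu
  have hYΛv : Y *ᵥ (Λ *ᵥ v) = μ • (Λ *ᵥ v) := by simpa using hanti v (-μ) hYv
  have huv : u ⬝ᵥ v = 0 := eig_orth hY (by intro h; apply hμ; linarith) hu hYv
  have hvΛv : v ⬝ᵥ (Λ *ᵥ v) = 0 := eig_orth hY (by intro h; apply hμ; linarith) hYv hYΛv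
  have hu0 : u ≠ 0 := by rintro rfl; exact hv (by simp [hvdef])
  set W := vecMulVec u v + vecMulVec v u with hW
  have hWs : W.IsSymm := by
    rw [Matrix.IsSymm, hW, transpose_add, myvecMulVec_transpose, myvecMulVec_transpose, add_comm]
  have hWY : jmul Y W = 0 := by
    rw [jmul_eq_zero_iff, hW]
    rw [mul_add, add_mul, mymul_vecMulVec, mymul_vecMulVec, myvecMulVec_mul, myvecMulVec_mul,
      hY.eq, hu, hYv, myvecMulVec_smul_left, myvecMulVec_smul_left,
      myvecMulVec_smul_right, myvecMulVec_smul_right]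
    module
  have hWne : W ≠ 0 := by
    intro h
    have h2 : W *ᵥ v = 0 := by rw [h]; simp
    rw [hW, add_mulVec, myvecMulVec_mulVec, myvecMulVec_mulVec, huv] at h2
    have h3 : u ⬝ᵥ ((v ⬝ᵥ v) • u + (0:ℝ) • v) = 0 := by rw [h2]; simp
    rw [dotProduct_add, dotProduct_smul, dotProduct_smul] at h3
    have hvv : 0 < v ⬝ᵥ v := mydot_self_pos hv
    have huu : 0 < u ⬝ᵥ u := mydot_self_pos hu0
    simp only [smul_eq_mul, zero_mul, add_zero] at h3
    nlinarith
  have hpos := hPhi W hWs hWne hWY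
  have hWW : jmul W W = W * W := by rw [jmul]; module
  have hWsq : W * W = (v ⬝ᵥ v) • vecMulVec u u + (u ⬝ᵥ u) • vecMulVec v v := by
    rw [hW, add_mul, mul_add, mul_add, myvecMulVec_mul_vecMulVec, myvecMulVec_mul_vecMulVec,
      myvecMulVec_mul_vecMulVec, myvecMulVec_mul_vecMulVec, huv, dotProduct_comm v u, huv]
    module
  have htr : minner (jmul W W) Λ = 0 := by
    rw [hWW, hWsq, minner, add_mul, smul_mul_assoc, smul_mul_assoc, trace_add, trace_smul,
      trace_smul, myvecMulVec_mul, myvecMulVec_mul, mytrace_vecMulVec, mytrace_vecMulVec]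
    rw [hΛ.eq, ← hvdef, huv, hvΛv]
    simp
  rw [htr] at hpos
  exact lt_irrefl 0 hpos

end core


section main
variable {m : ℕ} {Y Λ : Matrix (Fin m) (Fin m) ℝ}

lemma isHermitian_of_isSymm (h : Y.IsSymm) : Y.IsHermitian := by
  rw [Matrix.IsHermitian, conjTranspose_eq_transpose_of_trivial]; exact h

lemma lamY_zero (hY : Y.IsSymm) (hΛ : Λ.IsSymm) (hAC : Λ * Y + Y * Λ = 0)
    (hPhi : memPhi Λ Y) : Λ * Y = 0 := by
  classical
  have hY' : Y.IsHermitian := isHermitian_of_isSymm hY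
  set U : Matrix (Fin m) (Fin m) ℝ := (hY'.eigenvectorUnitary : Matrix (Fin m) (Fin m) ℝ) with hU
  set μ := hY'.eigenvalues with hμ
  have hcol : ∀ j, μ j ≠ 0 → Λ *ᵥ ⇑(hY'.eigenvectorBasis j) = 0 := fun j hj =>
    key_eig hY hΛ hAC hPhi hj (hY'.mulVec_eigenvectorBasis j)
  have hLUD : Λ * U * diagonal (RCLike.ofReal ∘ μ) = 0 := by
    ext i j
    rw [mul_diagonal]
    rcases eq_or_ne (μ j) 0 with h | h
    · simp [h, Function.comp]
    · have hcolU : (Λ * U) i j = (Λ *ᵥ ⇑(hY'.eigenvectorBasis j)) i := by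
        simp [mul_apply, mulVec, dotProduct, hU]
      rw [hcolU, hcol j h]
      simp
  conv_lhs => rw [hY'.spectral_theorem, Unitary.conjStarAlgAut_apply]
  rw [← mul_assoc, ← mul_assoc, ← hU, ← hμ, hLUD, zero_mul]

lemma lam_nonneg (hY : Y.IsSymm) (hΛ : Λ.IsSymm) (hAC : Λ * Y + Y * Λ = 0)
    (hPhi : memPhi Λ Y) (z : Fin m → ℝ) : 0 ≤ z ⬝ᵥ (Λ *ᵥ z) := by
  classical
  have hY' : Y.IsHermitian := isHermitian_of_isSymm hY
  set U : Matrix (Fin m) (Fin m) ℝ := (hY'.eigenvectorUnitary : Matrix (Fin m) (Fin m) ℝ) with hU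
  set μ := hY'.eigenvalues with hμ
  have hcol : ∀ j, μ j ≠ 0 → Λ *ᵥ ⇑(hY'.eigenvectorBasis j) = 0 := fun j hj =>
    key_eig hY hΛ hAC hPhi hj (hY'.mulVec_eigenvectorBasis j)
  have hUU : U * star U = 1 := mem_unitaryGroup_iff.mp hY'.eigenvectorUnitary.2
  have hUU' : star U * U = 1 := mem_unitaryGroup_iff'.mp hY'.eigenvectorUnitary.2
  set c : Fin m → ℝ := star U *ᵥ z with hc
  have hz : z = U *ᵥ c := by rw [hc, mulVec_mulVec, hUU, one_mulVec]
  set c₀ : Fin m → ℝ := fun i => if μ i = 0 then c i else 0 with hc₀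
  set c₁ : Fin m → ℝ := fun i => if μ i = 0 then 0 else c i with hc₁
  have hcc : c = c₀ + c₁ := by
    funext i; by_cases h : μ i = 0 <;> simp [hc₀, hc₁, h]
  set z₀ : Fin m → ℝ := U *ᵥ c₀ with hz₀
  set z₁ : Fin m → ℝ := U *ᵥ c₁ with hz₁
  have hz01 : z = z₀ + z₁ := by rw [hz, hcc, mulVec_add]
  have hΛz₁ : Λ *ᵥ z₁ = 0 := by
    rw [hz₁, mulVec_mulVec]
    ext i
    show ∑ j, (Λ * U) i j * c₁ j = 0
    apply Finset.sum_eq_zero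
    intro j _
    by_cases h : μ j = 0
    · simp [hc₁, h]
    · have hcolU : (Λ * U) i j = (Λ *ᵥ ⇑(hY'.eigenvectorBasis j)) i := by
        simp [mul_apply, mulVec, dotProduct, hU]
      rw [hcolU, hcol j h]
      simp
  have hYz₀ : Y *ᵥ z₀ = 0 := by
    have hYU : Y * U = U * diagonal (RCLike.ofReal ∘ μ) := by
      conv_lhs => rw [hY'.spectral_theorem, Unitary.conjStarAlgAut_apply]
      rw [← hU, ← hμ, mul_assoc, hUU', mul_one]
    rw [hz₀, mulVec_mulVec, hYU, ← mulVec_mulVec]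
    have hD : diagonal (RCLike.ofReal ∘ μ) *ᵥ c₀ = 0 := by
      ext i
      rw [mulVec_diagonal]
      by_cases h : μ i = 0 <;> simp [hc₀, h]
    rw [hD, mulVec_zero]
  have key : z ⬝ᵥ (Λ *ᵥ z) = z₀ ⬝ᵥ (Λ *ᵥ z₀) := by
    rw [hz01, mulVec_add, hΛz₁, add_zero, add_dotProduct]
    have h10 : z₁ ⬝ᵥ (Λ *ᵥ z₀) = 0 := by
      rw [dotProduct_mulVec]
      have hvm : z₁ ᵥ* Λ = 0 := by
        nth_rewrite 1 [← hΛ.eq]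
        rw [vecMul_transpose, hΛz₁]
      rw [hvm, zero_dotProduct]
    rw [h10, add_zero]
  rw [key]
  rcases eq_or_ne z₀ 0 with h | h
  · simp [h]
  · exact (ker_pos hY hΛ hPhi h hYz₀).le

lemma rank_sum (hY : Y.IsSymm) (hΛ : Λ.IsSymm) (hAC : Λ * Y + Y * Λ = 0)
    (hPhi : memPhi Λ Y) : Y.rank + Λ.rank = m := by
  have hΛY0 : Λ * Y = 0 := lamY_zero hY hΛ hAC hPhi
  have hrange : LinearMap.range Y.mulVecLin ≤ LinearMap.ker Λ.mulVecLin := by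
    rintro _ ⟨w, rfl⟩
    simp only [LinearMap.mem_ker, mulVecLin_apply, mulVec_mulVec, hΛY0, zero_mulVec]
  have hinf : LinearMap.ker Λ.mulVecLin ⊓ LinearMap.ker Y.mulVecLin = ⊥ := by
    rw [Submodule.eq_bot_iff]
    intro u hu
    rw [Submodule.mem_inf] at hu
    have h1 : Λ *ᵥ u = 0 := hu.1
    have h2 : Y *ᵥ u = 0 := hu.2
    by_contra h
    have hp := ker_pos hY hΛ hPhi h h2
    rw [h1, dotProduct_zero] at hp
    exact lt_irrefl 0 hp
  have hT : Module.finrank ℝ (Fin m → ℝ) = m := Module.finrank_fin_fun ℝ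
  have h1 : Y.rank ≤ Module.finrank ℝ (LinearMap.ker Λ.mulVecLin) :=
    Submodule.finrank_mono hrange
  have h2 : Module.finrank ℝ (LinearMap.ker Λ.mulVecLin)
      + Module.finrank ℝ (LinearMap.ker Y.mulVecLin) ≤ m := by
    have hs := Submodule.finrank_sup_add_finrank_inf_eq
      (LinearMap.ker Λ.mulVecLin) (LinearMap.ker Y.mulVecLin)
    rw [hinf, finrank_bot, add_zero] at hs
    have hle := Submodule.finrank_le (LinearMap.ker Λ.mulVecLin ⊔ LinearMap.ker Y.mulVecLin)
    rw [hT] at hle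
    omega
  have rn1 : Λ.rank + Module.finrank ℝ (LinearMap.ker Λ.mulVecLin) = m := by
    have := LinearMap.finrank_range_add_finrank_ker Λ.mulVecLin
    rw [hT] at this
    exact this
  have rn2 : Y.rank + Module.finrank ℝ (LinearMap.ker Y.mulVecLin) = m := by
    have := LinearMap.finrank_range_add_finrank_ker Y.mulVecLin
    rw [hT] at this
    exact this
  omega

end main

theorem stmt7 {n m : ℕ} (f : (Fin n → ℝ) → ℝ) (G : (Fin n → ℝ) → Matrix (Fin m) (Fin m) ℝ)
    (hf : ContDiff ℝ 2 f) (hG : ∀ i j, ContDiff ℝ 2 fun y => G y i j)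
    (x : Fin n → ℝ) (Y Λ : Matrix (Fin m) (Fin m) ℝ)
    (hY : Y.IsSymm) (hΛ : Λ.IsSymm) (hKKT : KKT2 f G x Y Λ) (hPhi : memPhi Λ Y) :
    KKT1 f G x Λ ∧ (G x).rank + Λ.rank = m := by
  obtain ⟨h1, h2, h3⟩ := hKKT
  have hAC : Λ * Y + Y * Λ = 0 := (jmul_eq_zero_iff _ _).mp h2
  have hΛY0 : Λ * Y = 0 := lamY_zero hY hΛ hAC hPhi
  have hYΛ0 : Y * Λ = 0 := by
    have h4 := hAC
    rw [hΛY0, zero_add] at h4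
    exact h4
  have hGx : G x = Y * Y := by
    rw [h3, jmul]
    module
  constructor
  · refine ⟨h1, ⟨isHermitian_of_isSymm hΛ, fun w => ?_⟩, ?_, ?_⟩
    · have hps := (posSemidef_iff_dotProduct_mulVec (M := Λ)).mpr
        ⟨isHermitian_of_isSymm hΛ, fun z => by simpa using lam_nonneg hY hΛ hAC hPhi z⟩
      exact hps.2 w
    · rw [hGx]
      have hps := posSemidef_conjTranspose_mul_self Y
      rwa [conjTranspose_eq_transpose_of_trivial, hY.eq] at hps
    · rw [hGx, jmul]
      have e1 : Λ * (Y * Y) = 0 := by rw [← mul_assoc, hΛY0, zero_mul]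
      have e2 : (Y * Y) * Λ = 0 := by rw [mul_assoc, hYΛ0, mul_zero]
      rw [e1, e2]
      simp
  · have hrk : (Y * Y).rank = Y.rank := by
      nth_rewrite 1 [← hY.eq]
      exact rank_transpose_mul_self Y
    rw [hGx, hrk]
    exact rank_sum hY hΛ hAC hPhi
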